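/- Fix integers n ≥ 2 and k ≥ 2, and let α = (α_1,…,α_k) and β = (β_1,…,β_k) be weak compositions (tuples of nonnegative integers) with α_1+⋯+α_k+β_1+⋯+β_k = n−1. Then the number of injective functions g : {1,…,n−1} → {1,…,n}×{1,…,k} having exactly α_j j-excedances and exactly β_j j-subcedances for every 1 ≤ j ≤ k equals the number of labeled rooted plane k-ary trees on n nodes having exactly α_j j-descents and exactly β_j j-ascents for every 1 ≤ j ≤ k. -/

import Mathlib

/-- A labeled rooted plane `k`-ary tree on `n` nodes (labels `Fin n`,
standing for `{1,…,n}`): a root `r` together with an injective map `par`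
assigning to each non-root vertex `v` a pair `(p, i)` meaning that `v` is the
`i`-th child of `p`, such that from every vertex, iterating the parent map
eventually reaches the root. -/
structure PlaneTree (n k : ℕ) where
  root : Fin n
  par : {v : Fin n // v ≠ root} → Fin n × Fin k
  par_inj : Function.Injective par
  reach : ∀ v : Fin n, ∃ m : ℕ,
    (fun u : Fin n => if h : u = root then root else (par ⟨u, h⟩).1)^[m] v = root

/-- `v` is a `j`-descent of `T` (indices `j : Fin k` correspond to the
1-based child positions `j + 1`). -/
def PlaneTree.IsDesc {n k : ℕ} (T : PlaneTree n k) (j : Fin k)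
    (v : {v : Fin n // v ≠ T.root}) : Prop :=
  (T.par v).2 = j ∧ v.1 < (T.par v).1

/-- `v` is a `j`-ascent of `T`. -/
def PlaneTree.IsAsc {n k : ℕ} (T : PlaneTree n k) (j : Fin k)
    (v : {v : Fin n // v ≠ T.root}) : Prop :=
  (T.par v).2 = j ∧ (T.par v).1 < v.1


namespace ProofER


section Rot
variable {α : Type*} [LinearOrder α]

def ltset (T : Finset α) (x : α) : Finset α := T.filter (fun z => z < x)
def gtset (T : Finset α) (x : α) : Finset α := T.filter (fun z => x < z)

theorem mem_ltset {T : Finset α} {x z : α} : z ∈ ltset T x ↔ z ∈ T ∧ z < x :=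
  Finset.mem_filter

theorem mem_gtset {T : Finset α} {x z : α} : z ∈ gtset T x ↔ z ∈ T ∧ x < z :=
  Finset.mem_filter

def rotD (T : Finset α) (x : α) : α :=
  if hx : x ∈ T then
    if h : (ltset T x).Nonempty then (ltset T x).max' h
    else T.max' ⟨x, hx⟩
  else x

def rotU (T : Finset α) (x : α) : α :=
  if hx : x ∈ T then
    if h : (gtset T x).Nonempty then (gtset T x).min' h
    else T.min' ⟨x, hx⟩
  else x

theorem rotD_not_mem {T : Finset α} {x : α} (hx : x ∉ T) : rotD T x = x := by
  simp [rotD, hx]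

theorem rotU_not_mem {T : Finset α} {x : α} (hx : x ∉ T) : rotU T x = x := by
  simp [rotU, hx]

theorem rotD_mem {T : Finset α} {x : α} (hx : x ∈ T) : rotD T x ∈ T := by
  rw [rotD, dif_pos hx]
  split
  · exact (mem_ltset.1 ((ltset T x).max'_mem _)).1
  · exact T.max'_mem _

theorem rotU_mem {T : Finset α} {x : α} (hx : x ∈ T) : rotU T x ∈ T := by
  rw [rotU, dif_pos hx]
  split
  · exact (mem_gtset.1 ((gtset T x).min'_mem _)).1
  · exact T.min'_mem _

theorem rotU_rotD (T : Finset α) (x : α) : rotU T (rotD T x) = x := by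
  by_cases hx : x ∈ T
  · rw [rotD, dif_pos hx]
    split
    · rename_i h
      have hymem := (ltset T x).max'_mem h
      set y := (ltset T x).max' h with hy
      have hyT : y ∈ T := (mem_ltset.1 hymem).1
      have hyx : y < x := (mem_ltset.1 hymem).2
      have hne : (gtset T y).Nonempty := ⟨x, mem_gtset.2 ⟨hx, hyx⟩⟩
      rw [rotU, dif_pos hyT, dif_pos hne]
      have hmem := (gtset T y).min'_mem hne
      refine le_antisymm (Finset.min'_le _ _ (mem_gtset.2 ⟨hx, hyx⟩)) ?_
      by_contra hlt
      push_neg at hlt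
      have h1 : (gtset T y).min' hne ∈ ltset T x :=
        mem_ltset.2 ⟨(mem_gtset.1 hmem).1, hlt⟩
      have h2 : (gtset T y).min' hne ≤ y := Finset.le_max' _ _ h1
      exact absurd (mem_gtset.1 hmem).2 (not_lt.2 h2)
    · rename_i h
      have hmaxT : T.max' ⟨x, hx⟩ ∈ T := T.max'_mem _
      have hemp : ¬(gtset T (T.max' ⟨x, hx⟩)).Nonempty := by
        rintro ⟨z, hz⟩
        exact absurd (Finset.le_max' T z (mem_gtset.1 hz).1)
          (not_le.2 (mem_gtset.1 hz).2)
      rw [rotU, dif_pos hmaxT, dif_neg hemp]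
      refine le_antisymm (Finset.min'_le _ _ hx) ?_
      by_contra hlt
      push_neg at hlt
      exact h ⟨T.min' ⟨x, hx⟩, mem_ltset.2 ⟨T.min'_mem _, hlt⟩⟩
  · rw [rotD_not_mem hx, rotU_not_mem hx]

theorem rotD_rotU (T : Finset α) (x : α) : rotD T (rotU T x) = x := by
  by_cases hx : x ∈ T
  · rw [rotU, dif_pos hx]
    split
    · rename_i h
      have hymem := (gtset T x).min'_mem h
      set y := (gtset T x).min' h with hy
      have hyT : y ∈ T := (mem_gtset.1 hymem).1
      have hyx : x < y := (mem_gtset.1 hymem).2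
      have hne : (ltset T y).Nonempty := ⟨x, mem_ltset.2 ⟨hx, hyx⟩⟩
      rw [rotD, dif_pos hyT, dif_pos hne]
      have hmem := (ltset T y).max'_mem hne
      refine le_antisymm ?_ (Finset.le_max' _ _ (mem_ltset.2 ⟨hx, hyx⟩))
      by_contra hlt
      push_neg at hlt
      have h1 : (ltset T y).max' hne ∈ gtset T x :=
        mem_gtset.2 ⟨(mem_ltset.1 hmem).1, hlt⟩
      have h2 : y ≤ (ltset T y).max' hne := Finset.min'_le _ _ h1
      exact absurd (mem_ltset.1 hmem).2 (not_lt.2 h2)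
    · rename_i h
      have hminT : T.min' ⟨x, hx⟩ ∈ T := T.min'_mem _
      have hemp : ¬(ltset T (T.min' ⟨x, hx⟩)).Nonempty := by
        rintro ⟨z, hz⟩
        exact absurd (Finset.min'_le T z (mem_ltset.1 hz).1)
          (not_le.2 (mem_ltset.1 hz).2)
      rw [rotD, dif_pos hminT, dif_neg hemp]
      refine le_antisymm ?_ (Finset.le_max' _ _ hx)
      by_contra hlt
      push_neg at hlt
      exact h ⟨T.max' ⟨x, hx⟩, mem_gtset.2 ⟨T.max'_mem _, hlt⟩⟩
  · rw [rotU_not_mem hx, rotD_not_mem hx]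

def rotEquiv (T : Finset α) : Equiv.Perm α where
  toFun := rotD T
  invFun := rotU T
  left_inv := rotU_rotD T
  right_inv := rotD_rotU T

end Rot



section Iter
variable {m : ℕ} (h : Fin (m+1) → Fin (m+1))

/-- pigeonhole: some repeat among the first `m+2` iterates. -/
theorem exists_repeat (v : Fin (m+1)) :
    ∃ a b, a < b ∧ b ≤ m + 1 ∧ h^[a] v = h^[b] v := by
  have hcard : Fintype.card (Fin (m+1)) < Fintype.card (Fin (m+2)) := by simp
  obtain ⟨i, j, hij, heq⟩ :=
    Fintype.exists_ne_map_eq_of_card_lt (fun i : Fin (m+2) => h^[(i : ℕ)] v) hcard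
  rcases lt_or_gt_of_ne (fun hc : (i : ℕ) = (j : ℕ) => hij (Fin.ext hc)) with hlt | hlt
  · exact ⟨i, j, hlt, Nat.lt_succ_iff.1 j.isLt, heq⟩
  · exact ⟨j, i, hlt, Nat.lt_succ_iff.1 i.isLt, heq.symm⟩

/-- every iterate equals an early iterate. -/
theorem iterate_eq_small (v : Fin (m+1)) : ∀ t, ∃ i ≤ m, h^[t] v = h^[i] v := by
  intro t
  induction t using Nat.strong_induction_on with
  | _ t ih =>
    by_cases ht : t ≤ m
    · exact ⟨t, ht, rfl⟩
    · push_neg at ht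
      obtain ⟨a, b, hab, hb, heq⟩ := exists_repeat h v
      have hbt : b ≤ t := le_trans hb ht
      have hkey : h^[t] v = h^[t - b + a] v := by
        have h1 : h^[t] v = h^[t - b] (h^[b] v) := by
          rw [← Function.iterate_add_apply]
          congr 1
          omega
        rw [h1, ← heq, ← Function.iterate_add_apply]
      have hlt : t - b + a < t := by omega
      obtain ⟨i, hi, heq2⟩ := ih (t - b + a) hlt
      exact ⟨i, hi, hkey.trans heq2⟩

/-- the forward orbit of `v` (as a finset). -/
def orb (v : Fin (m+1)) : Finset (Fin (m+1)) :=
  (Finset.range (m+1)).image (fun i => h^[i] v)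

theorem orb_nonempty (v : Fin (m+1)) : (orb h v).Nonempty :=
  ⟨v, Finset.mem_image.2 ⟨0, Finset.mem_range.2 (Nat.succ_pos m), rfl⟩⟩

theorem mem_orb (v : Fin (m+1)) (t : ℕ) : h^[t] v ∈ orb h v := by
  obtain ⟨i, hi, heq⟩ := iterate_eq_small h v t
  exact heq ▸ Finset.mem_image.2 ⟨i, Finset.mem_range.2 (Nat.lt_succ_of_le hi), rfl⟩

/-- the maximum of the forward orbit. -/
def omax (v : Fin (m+1)) : Fin (m+1) := (orb h v).max' (orb_nonempty h v)

theorem iterate_le_omax (v : Fin (m+1)) (t : ℕ) : h^[t] v ≤ omax h v :=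
  Finset.le_max' _ _ (mem_orb h v t)

theorem le_omax (v : Fin (m+1)) : v ≤ omax h v := iterate_le_omax h v 0

theorem omax_eq_iterate (v : Fin (m+1)) : ∃ i, h^[i] v = omax h v := by
  have := (orb h v).max'_mem (orb_nonempty h v)
  simp only [orb, Finset.mem_image] at this
  obtain ⟨i, _, hi⟩ := this
  exact ⟨i, hi⟩

/-- `v` lies on a cycle (bounded version, decidable). -/
def IsCyc (v : Fin (m+1)) : Prop := ∃ i ∈ Finset.Icc 1 (m+1), h^[i] v = v

instance (v : Fin (m+1)) : Decidable (IsCyc h v) := by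
  unfold IsCyc; infer_instance

theorem isCyc_of_exists {v : Fin (m+1)} (hv : ∃ i, 0 < i ∧ h^[i] v = v) :
    IsCyc h v := by
  have hex : ∃ i, (0 < i ∧ h^[i] v = v) := hv
  classical
  set p := Nat.find hex with hp
  have hps := Nat.find_spec hex
  by_cases hpm : p ≤ m + 1
  · exact ⟨p, Finset.mem_Icc.2 ⟨hps.1, hpm⟩, hps.2⟩
  · exfalso
    push_neg at hpm
    obtain ⟨a, b, hab, hb, heq⟩ := exists_repeat h v
    have hbp : b < p := lt_of_le_of_lt hb hpm
    have hkey : h^[p - b + a] v = v := by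
      have h1 : h^[p] v = h^[p - b] (h^[b] v) := by
        rw [← Function.iterate_add_apply]; congr 1; omega
      have h2 : h^[p - b + a] v = h^[p - b] (h^[a] v) := by
        rw [← Function.iterate_add_apply]
      rw [h2, heq, ← h1, hps.2]
    have : p ≤ p - b + a := Nat.find_min' hex ⟨by omega, hkey⟩
    omega

theorem isCyc_iterate {v : Fin (m+1)} (hv : IsCyc h v) (t : ℕ) :
    IsCyc h (h^[t] v) := by
  obtain ⟨i, hi, heq⟩ := hv
  refine ⟨i, hi, ?_⟩
  calc h^[i] (h^[t] v) = h^[i + t] v := (Function.iterate_add_apply h i t v).symm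
    _ = h^[t] (h^[i] v) := by rw [Nat.add_comm i t, Function.iterate_add_apply]
    _ = h^[t] v := by rw [heq]

/-- from any point of the cycle one can return to `v`. -/
theorem isCyc_return {v : Fin (m+1)} (hv : IsCyc h v) (t : ℕ) :
    ∃ s, h^[s] (h^[t] v) = v := by
  obtain ⟨i, hi, heq⟩ := hv
  have hi1 : 1 ≤ i := (Finset.mem_Icc.1 hi).1
  have hper : ∀ c, h^[i * c] v = v := by
    intro c
    induction c with
    | zero => simp
    | succ c ih =>
      rw [Nat.mul_succ, Function.iterate_add_apply, heq, ih]
  refine ⟨i * (t + 1) - t, ?_⟩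
  rw [← Function.iterate_add_apply]
  have h2 : t + 1 ≤ i * (t + 1) := Nat.le_mul_of_pos_left _ hi1
  have h3 : i * (t + 1) - t + t = i * (t + 1) := by omega
  rw [h3, hper]

theorem omax_iterate_eq {v : Fin (m+1)} (hv : IsCyc h v) (t : ℕ) :
    omax h (h^[t] v) = omax h v := by
  apply le_antisymm
  · obtain ⟨i, hi⟩ := omax_eq_iterate h (h^[t] v)
    rw [← hi, ← Function.iterate_add_apply]
    exact iterate_le_omax h v _
  · obtain ⟨i, hi⟩ := omax_eq_iterate h v
    obtain ⟨s, hs⟩ := isCyc_return h hv t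
    calc omax h v = h^[i] v := hi.symm
      _ = h^[i] (h^[s] (h^[t] v)) := by rw [hs]
      _ = h^[i + s] (h^[t] v) := (Function.iterate_add_apply h i s _).symm
      _ ≤ omax h (h^[t] v) := iterate_le_omax h _ _
end Iter


section Rot2
variable {α : Type*} [LinearOrder α]

theorem rotD_cases {T : Finset α} {x : α} (hx : x ∈ T) :
    (rotD T x < x ∧ rotD T x ∈ T) ∨ rotD T x = T.max' ⟨x, hx⟩ := by
  rw [rotD, dif_pos hx]
  split
  · rename_i h
    left
    have := (ltset T x).max'_mem h
    exact ⟨(mem_ltset.1 this).2, (mem_ltset.1 this).1⟩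
  · right; rfl

theorem rotU_cases {T : Finset α} {x : α} (hx : x ∈ T) :
    (x < rotU T x ∧ rotU T x ∈ T) ∨ rotU T x = T.min' ⟨x, hx⟩ := by
  rw [rotU, dif_pos hx]
  split
  · rename_i h
    left
    have := (gtset T x).min'_mem h
    exact ⟨(mem_gtset.1 this).2, (mem_gtset.1 this).1⟩
  · right; rfl

end Rot2

section Core
variable {m k : ℕ}

/-- the top vertex. -/
def topv (m : ℕ) : Fin (m+1) := Fin.last m

/-- next-vertex map of a partial parent function. -/
def nxt (f : Fin (m+1) → Option (Fin (m+1) × Fin k)) (v : Fin (m+1)) : Fin (m+1) :=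
  (f v).elim v Prod.fst

theorem nxt_none {f : Fin (m+1) → Option (Fin (m+1) × Fin k)} {v : Fin (m+1)}
    (hv : f v = none) : nxt f v = v := by simp [nxt, hv]

theorem nxt_some {f : Fin (m+1) → Option (Fin (m+1) × Fin k)} {v : Fin (m+1)}
    {q : Fin (m+1) × Fin k} (hv : f v = some q) : nxt f v = q.1 := by
  simp [nxt, hv]

/-- cycle maxima (excluding `topv`). -/
def MA (f : Fin (m+1) → Option (Fin (m+1) × Fin k)) : Finset (Fin (m+1)) :=
  Finset.univ.filter
    (fun v => v ≠ topv m ∧ IsCyc (nxt f) v ∧ omax (nxt f) v = v)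

def TA (f : Fin (m+1) → Option (Fin (m+1) × Fin k)) : Finset (Fin (m+1)) :=
  insert (topv m) (MA f)

theorem mem_MA {f : Fin (m+1) → Option (Fin (m+1) × Fin k)} {v : Fin (m+1)} :
    v ∈ MA f ↔ v ≠ topv m ∧ IsCyc (nxt f) v ∧ omax (nxt f) v = v := by
  simp [MA]

theorem top_mem_TA {f : Fin (m+1) → Option (Fin (m+1) × Fin k)} :
    topv m ∈ TA f := Finset.mem_insert_self _ _

theorem top_not_mem_MA {f : Fin (m+1) → Option (Fin (m+1) × Fin k)} :
    topv m ∉ MA f := fun h => (mem_MA.1 h).1 rfl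

theorem maxTA {f : Fin (m+1) → Option (Fin (m+1) × Fin k)} :
    (TA f).max' ⟨_, top_mem_TA⟩ = topv m := by
  refine le_antisymm (Fin.le_last _) (Finset.le_max' _ _ top_mem_TA)

/-- the forward map: precompose with the rotate-down permutation. -/
def phi (f : Fin (m+1) → Option (Fin (m+1) × Fin k)) :
    Fin (m+1) → Option (Fin (m+1) × Fin k) :=
  fun v => f (rotD (TA f) v)

/-- the new root. -/
def rA (f : Fin (m+1) → Option (Fin (m+1) × Fin k)) : Fin (m+1) :=
  rotU (TA f) (topv m)

-- context: f is a "function side" object, hole at topv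
variable {f : Fin (m+1) → Option (Fin (m+1) × Fin k)}
  (hhole : ∀ v, f v = none ↔ v = topv m)

section WithHole
include hhole

theorem nxt_top : nxt f (topv m) = topv m :=
  nxt_none (by rw [hhole])

theorem isCyc_top : IsCyc (nxt f) (topv m) :=
  ⟨1, Finset.mem_Icc.2 ⟨le_refl 1, by omega⟩, by
    simp [Function.iterate_one, nxt_top hhole]⟩

theorem cyc_iterate_ne_top {v : Fin (m+1)} (hv : IsCyc (nxt f) v)
    (hne : v ≠ topv m) (t : ℕ) : (nxt f)^[t] v ≠ topv m := by
  intro hc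
  obtain ⟨s, hs⟩ := isCyc_return (nxt f) hv t
  rw [hc, Function.iterate_fixed (nxt_top hhole)] at hs
  exact hne hs.symm

theorem TA_subset_cyc {v : Fin (m+1)} (hv : v ∈ TA f) : IsCyc (nxt f) v := by
  rcases Finset.mem_insert.1 hv with h | h
  · exact h ▸ isCyc_top hhole
  · exact (mem_MA.1 h).2.1

omit hhole in
theorem MA_nxt_le {v : Fin (m+1)} (hv : v ∈ MA f) : nxt f v ≤ v := by
  have := iterate_le_omax (nxt f) v 1
  rw [Function.iterate_one, (mem_MA.1 hv).2.2] at this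
  exact this

/-- hole of `phi f` is at `rA f`. -/
theorem phi_hole (v : Fin (m+1)) : phi f v = none ↔ v = rA f := by
  rw [phi, hhole]
  constructor
  · intro h
    have h2 := congrArg (rotU (TA f)) h
    rw [rotU_rotD] at h2
    exact h2
  · intro h
    rw [h, rA, rotD_rotU]

omit hhole in
theorem phi_inj (hinj : Function.Injective f) : Function.Injective (phi f) :=
  fun u v huv => by
    have := hinj huv
    have h2 := congrArg (rotU (TA f)) this
    rwa [rotU_rotD, rotU_rotD] at h2

end WithHole

end Core

section Reach
variable {m k : ℕ}
variable {f : Fin (m+1) → Option (Fin (m+1) × Fin k)}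
  (hhole : ∀ v, f v = none ↔ v = topv m)

omit hhole in
theorem phi_eq_off {v : Fin (m+1)} (hv : v ∉ TA f) : phi f v = f v := by
  rw [phi, rotD_not_mem hv]

omit hhole in
theorem nxt_phi_off {v : Fin (m+1)} (hv : v ∉ TA f) :
    nxt (phi f) v = nxt f v := by
  rw [nxt, phi_eq_off hv, nxt]

omit hhole in
theorem iterate_phi_eq {v : Fin (m+1)} {t : ℕ}
    (hav : ∀ i < t, (nxt f)^[i] v ∉ TA f) :
    (nxt (phi f))^[t] v = (nxt f)^[t] v := by
  induction t with
  | zero => rfl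
  | succ t ih =>
    rw [Function.iterate_succ_apply', Function.iterate_succ_apply',
      ih (fun i hi => hav i (Nat.lt_succ_of_lt hi)),
      nxt_phi_off (hav t (Nat.lt_succ_self t))]

include hhole

theorem nxt_phi_eq {x : Fin (m+1)} (hne : rotD (TA f) x ≠ topv m) :
    nxt (phi f) x = nxt f (rotD (TA f) x) := by
  obtain ⟨q, hq⟩ : ∃ q, f (rotD (TA f) x) = some q := by
    cases hq : f (rotD (TA f) x) with
    | none => exact absurd ((hhole _).1 hq) hne
    | some q => exact ⟨q, rfl⟩
  rw [nxt_some (show phi f x = some q from by rw [phi, hq]), nxt_some hq]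

theorem reach_omax {v : Fin (m+1)} (hc : IsCyc (nxt f) v) (hne : v ≠ topv m) :
    ∃ t, (nxt (phi f))^[t] v = omax (nxt f) v ∧ omax (nxt f) v ∈ MA f := by
  classical
  have hwne : omax (nxt f) v ≠ topv m := by
    obtain ⟨i, hi⟩ := omax_eq_iterate (nxt f) v
    rw [← hi]
    exact cyc_iterate_ne_top hhole hc hne i
  have hwMA : omax (nxt f) v ∈ MA f := by
    obtain ⟨i, hi⟩ := omax_eq_iterate (nxt f) v
    refine mem_MA.2 ⟨hwne, ?_, ?_⟩
    · rw [← hi]; exact isCyc_iterate _ hc i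
    · rw [← hi, omax_iterate_eq _ hc i, hi]
  have hex : ∃ t, (nxt f)^[t] v = omax (nxt f) v := omax_eq_iterate (nxt f) v
  set t := Nat.find hex with htdef
  have hts : (nxt f)^[t] v = omax (nxt f) v := Nat.find_spec hex
  have hav : ∀ i < t, (nxt f)^[i] v ∉ TA f := by
    intro i hi hTA
    rcases Finset.mem_insert.1 hTA with h | h
    · exact cyc_iterate_ne_top hhole hc hne i h
    · have h1 : omax (nxt f) ((nxt f)^[i] v) = (nxt f)^[i] v := (mem_MA.1 h).2.2
      rw [omax_iterate_eq _ hc i] at h1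
      exact Nat.find_min hex hi h1.symm
  exact ⟨t, by rw [iterate_phi_eq hav, hts], hwMA⟩

theorem from_MA_step {w2 : Fin (m+1)} (hw2 : w2 ∈ MA f) :
    IsCyc (nxt f) (nxt f w2) ∧ nxt f w2 ≠ topv m ∧
      omax (nxt f) (nxt f w2) = w2 := by
  obtain ⟨hne, hc, homax⟩ := mem_MA.1 hw2
  have h1 : nxt f w2 = (nxt f)^[1] w2 := rfl
  refine ⟨h1 ▸ isCyc_iterate _ hc 1, h1 ▸ cyc_iterate_ne_top hhole hc hne 1, ?_⟩
  rw [h1, omax_iterate_eq _ hc 1, homax]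

omit hhole in
/-- if the image under `rotD` is not `topv`, it is a smaller element of `MA`. -/
theorem rotD_MA {x : Fin (m+1)} (hx : x ∈ TA f)
    (hne : rotD (TA f) x ≠ topv m) :
    rotD (TA f) x ∈ MA f ∧ rotD (TA f) x < x := by
  rcases rotD_cases hx with ⟨hlt, hmem⟩ | heq
  · rcases Finset.mem_insert.1 hmem with h | h
    · exact absurd h hne
    · exact ⟨h, hlt⟩
  · rw [maxTA] at heq
    exact absurd heq hne

/-- if `rotD x = topv` then `x` is the new root. -/
theorem rotD_top_root {x : Fin (m+1)} (heq : rotD (TA f) x = topv m) :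
    x = rA f :=
  (phi_hole hhole x).1 (by rw [phi, heq, hhole])

theorem cyc_reach : ∀ (n : ℕ) (v : Fin (m+1)), IsCyc (nxt f) v →
    v ≠ topv m → (omax (nxt f) v : ℕ) ≤ n →
    ∃ t, (nxt (phi f))^[t] v = rA f := by
  intro n
  induction n using Nat.strong_induction_on with
  | _ n ih =>
    intro v hc hne hle
    obtain ⟨t1, ht1, hwMA⟩ := reach_omax hhole hc hne
    have hwTA : omax (nxt f) v ∈ TA f := Finset.mem_insert_of_mem hwMA
    by_cases htop : rotD (TA f) (omax (nxt f) v) = topv m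
    · exact ⟨t1, by rw [ht1, rotD_top_root hhole htop]⟩
    · obtain ⟨hw2MA, hw2lt⟩ := rotD_MA hwTA htop
      obtain ⟨hac, hane, haomax⟩ := from_MA_step hhole hw2MA
      have hstep : nxt (phi f) (omax (nxt f) v) =
          nxt f (rotD (TA f) (omax (nxt f) v)) := nxt_phi_eq hhole htop
      have hlt2 : ((rotD (TA f) (omax (nxt f) v) : Fin (m+1)) : ℕ) < n :=
        lt_of_lt_of_le hw2lt hle
      obtain ⟨t2, ht2⟩ := ih _ hlt2 _ hac hane (le_of_eq (congrArg _ haomax))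
      refine ⟨t2 + 1 + t1, ?_⟩
      rw [Function.iterate_add_apply, ht1, Function.iterate_add_apply,
        Function.iterate_one, hstep, ht2]

theorem phi_reach (v : Fin (m+1)) :
    ∃ t, (nxt (phi f))^[t] v = rA f := by
  classical
  have hex : ∃ t, IsCyc (nxt f) ((nxt f)^[t] v) := by
    obtain ⟨a, b, hab, hb, heq⟩ := exists_repeat (nxt f) v
    refine ⟨a, isCyc_of_exists _ ⟨b - a, by omega, ?_⟩⟩
    rw [← Function.iterate_add_apply]
    have hba : b - a + a = b := by omega
    rw [hba, ← heq]
  set t := Nat.find hex with htdef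
  have hcyc : IsCyc (nxt f) ((nxt f)^[t] v) := Nat.find_spec hex
  have h1 : (nxt (phi f))^[t] v = (nxt f)^[t] v :=
    iterate_phi_eq (fun i hi hTA => Nat.find_min hex hi (TA_subset_cyc hhole hTA))
  by_cases hu : (nxt f)^[t] v = topv m
  · by_cases h2 : rotD (TA f) (topv m) = topv m
    · exact ⟨t, by rw [h1, hu, rotD_top_root hhole h2]⟩
    · obtain ⟨hw2MA, _⟩ := rotD_MA top_mem_TA h2
      obtain ⟨hac, hane, haomax⟩ := from_MA_step hhole hw2MA
      have hstep : nxt (phi f) (topv m) = nxt f (rotD (TA f) (topv m)) :=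
        nxt_phi_eq hhole h2
      obtain ⟨t2, ht2⟩ := cyc_reach hhole _ _ hac hane (le_refl _)
      refine ⟨t2 + 1 + t, ?_⟩
      rw [Function.iterate_add_apply, h1, hu, Function.iterate_add_apply,
        Function.iterate_one, hstep, ht2]
  · obtain ⟨s, hs⟩ := cyc_reach hhole _ _ hcyc hu (le_refl _)
    exact ⟨s + t, by rw [Function.iterate_add_apply, h1, hs]⟩

end Reach

section Iter2
variable {m : ℕ} (h : Fin (m+1) → Fin (m+1))

theorem omax_succ (v : Fin (m+1)) : omax h v = max v (omax h (h v)) := by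
  apply le_antisymm
  · obtain ⟨i, hi⟩ := omax_eq_iterate h v
    rcases i with _ | j
    · exact hi ▸ le_max_left _ _
    · rw [← hi, Function.iterate_succ_apply]
      exact le_trans (iterate_le_omax h (h v) j) (le_max_right _ _)
  · refine max_le (le_omax h v) ?_
    obtain ⟨j, hj⟩ := omax_eq_iterate h (h v)
    rw [← hj, ← Function.iterate_succ_apply]
    exact iterate_le_omax h v _

theorem iterate_le_of_periodic {v w : Fin (m+1)} {p : ℕ} (hp : 0 < p)
    (hper : h^[p] v = v) (hbd : ∀ i ≤ p, h^[i] v ≤ w) :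
    ∀ s, h^[s] v ≤ w := by
  intro s
  induction s using Nat.strong_induction_on with
  | _ s ih =>
    by_cases hs : s ≤ p
    · exact hbd s hs
    · push_neg at hs
      have : h^[s] v = h^[s - p] v := by
        conv_lhs => rw [show s = (s - p) + p by omega]
        rw [Function.iterate_add_apply, hper]
      rw [this]
      exact ih (s - p) (by omega)

theorem cyc_iterate_ne_fix {r v : Fin (m+1)} (hr : h r = r)
    (hv : IsCyc h v) (hne : v ≠ r) (t : ℕ) : h^[t] v ≠ r := by
  intro hc
  obtain ⟨s, hs⟩ := isCyc_return h hv t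
  rw [hc, Function.iterate_fixed hr] at hs
  exact hne hs.symm

theorem cyc_eq_fix {r v : Fin (m+1)} (hr : h r = r)
    (hreach : ∃ t, h^[t] v = r) (hv : IsCyc h v) : v = r := by
  by_contra hne
  obtain ⟨t, ht⟩ := hreach
  exact cyc_iterate_ne_fix h hr hv hne t ht

theorem orbit_linear {u w1 w2 : Fin (m+1)} {i j : ℕ}
    (h1 : h^[i] u = w1) (h2 : h^[j] u = w2) :
    (∃ s, h^[s] w1 = w2) ∨ ∃ s, h^[s] w2 = w1 := by
  rcases le_total i j with hij | hij
  · left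
    exact ⟨j - i, by rw [← h1, ← Function.iterate_add_apply, Nat.sub_add_cancel hij, h2]⟩
  · right
    exact ⟨i - j, by rw [← h2, ← Function.iterate_add_apply, Nat.sub_add_cancel hij, h1]⟩

end Iter2

section Rot3
variable {α : Type*} [LinearOrder α]

theorem rotU_of_gt_nonempty {T : Finset α} {x : α} (hx : x ∈ T)
    (hne : (gtset T x).Nonempty) : rotU T x ∈ T ∧ x < rotU T x := by
  rw [rotU, dif_pos hx, dif_pos hne]
  have := (gtset T x).min'_mem hne
  exact ⟨(mem_gtset.1 this).1, (mem_gtset.1 this).2⟩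

theorem le_rotD {T : Finset α} {x z : α} (hx : x ∈ T) (hz : z ∈ T)
    (hlt : z < x) : z ≤ rotD T x := by
  have hne : (ltset T x).Nonempty := ⟨z, mem_ltset.2 ⟨hz, hlt⟩⟩
  rw [rotD, dif_pos hx, dif_pos hne]
  exact Finset.le_max' _ _ (mem_ltset.2 ⟨hz, hlt⟩)

end Rot3

section Core2
variable {m k : ℕ}

theorem max'_eq_top {T : Finset (Fin (m+1))} (hT : topv m ∈ T) :
    T.max' ⟨_, hT⟩ = topv m :=
  le_antisymm (Fin.le_last _) (Finset.le_max' _ _ hT)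

end Core2

section Psi
variable {m k : ℕ}

/-- reachable from the top vertex (bounded, decidable). -/
def Rch (f : Fin (m+1) → Option (Fin (m+1) × Fin k)) (v : Fin (m+1)) : Prop :=
  ∃ i ∈ Finset.range (m+2), (nxt f)^[i] (topv m) = v

instance (f : Fin (m+1) → Option (Fin (m+1) × Fin k)) (v : Fin (m+1)) :
    Decidable (Rch f v) := by unfold Rch; infer_instance

/-- suffix maxima on the path from the top (excluding `topv`). -/
def MB (f : Fin (m+1) → Option (Fin (m+1) × Fin k)) : Finset (Fin (m+1)) :=
  Finset.univ.filter
    (fun v => v ≠ topv m ∧ Rch f v ∧ omax (nxt f) v = v)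

def TB (f : Fin (m+1) → Option (Fin (m+1) × Fin k)) : Finset (Fin (m+1)) :=
  insert (topv m) (MB f)

/-- the backward map. -/
def psi (f : Fin (m+1) → Option (Fin (m+1) × Fin k)) :
    Fin (m+1) → Option (Fin (m+1) × Fin k) :=
  fun v => f (rotU (TB f) v)

theorem mem_MB {f : Fin (m+1) → Option (Fin (m+1) × Fin k)} {v : Fin (m+1)} :
    v ∈ MB f ↔ v ≠ topv m ∧ Rch f v ∧ omax (nxt f) v = v := by simp [MB]

theorem top_mem_TB {f : Fin (m+1) → Option (Fin (m+1) × Fin k)} :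
    topv m ∈ TB f := Finset.mem_insert_self _ _

theorem Rch_of_exists {f : Fin (m+1) → Option (Fin (m+1) × Fin k)}
    {v : Fin (m+1)} (h : ∃ i, (nxt f)^[i] (topv m) = v) : Rch f v := by
  obtain ⟨i, hi⟩ := h
  obtain ⟨j, hj, heq⟩ := iterate_eq_small (nxt f) (topv m) i
  exact ⟨j, Finset.mem_range.2 (by omega), by rw [← heq, hi]⟩

theorem Rch_top {f : Fin (m+1) → Option (Fin (m+1) × Fin k)} :
    Rch f (topv m) := ⟨0, Finset.mem_range.2 (by omega), rfl⟩

theorem Rch_iterate {f : Fin (m+1) → Option (Fin (m+1) × Fin k)}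
    {u : Fin (m+1)} (hu : Rch f u) (t : ℕ) : Rch f ((nxt f)^[t] u) := by
  obtain ⟨i, _, hi⟩ := hu
  exact Rch_of_exists ⟨t + i, by rw [Function.iterate_add_apply, hi]⟩

theorem psi_eq_off {f : Fin (m+1) → Option (Fin (m+1) × Fin k)}
    {v : Fin (m+1)} (hv : v ∉ TB f) : psi f v = f v := by
  rw [psi, rotU_not_mem hv]

theorem nxt_psi_off {f : Fin (m+1) → Option (Fin (m+1) × Fin k)}
    {v : Fin (m+1)} (hv : v ∉ TB f) : nxt (psi f) v = nxt f v := by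
  rw [nxt, psi_eq_off hv, nxt]

theorem iterate_psi_eq {f : Fin (m+1) → Option (Fin (m+1) × Fin k)}
    {v : Fin (m+1)} {t : ℕ} (hav : ∀ i < t, (nxt f)^[i] v ∉ TB f) :
    (nxt (psi f))^[t] v = (nxt f)^[t] v := by
  induction t with
  | zero => rfl
  | succ t ih =>
    rw [Function.iterate_succ_apply', Function.iterate_succ_apply',
      ih (fun i hi => hav i (Nat.lt_succ_of_lt hi)),
      nxt_psi_off (hav t (Nat.lt_succ_self t))]

-- tree-side context
variable {f : Fin (m+1) → Option (Fin (m+1) × Fin k)} {r : Fin (m+1)}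
  (hhole : ∀ v, f v = none ↔ v = r)
  (hreach : ∀ v, ∃ t, (nxt f)^[t] v = r)

include hhole

theorem nxt_r : nxt f r = r := nxt_none ((hhole r).2 rfl)

include hreach

theorem cyc_eq_r {u : Fin (m+1)} (hu : IsCyc (nxt f) u) : u = r :=
  cyc_eq_fix (nxt f) (nxt_r hhole) (hreach u) hu

omit hreach in
theorem Rch_r_top {u : Fin (m+1)} (hu : Rch f u) (hr : r = topv m) :
    u = topv m := by
  obtain ⟨i, _, hi⟩ := hu
  rw [← hi, ← hr, Function.iterate_fixed (by rw [hr]; exact hr ▸ nxt_r hhole)]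

theorem reach_ne_top {u : Fin (m+1)} (hu : Rch f u) (hune : u ≠ topv m)
    (t : ℕ) : (nxt f)^[t] u ≠ topv m := by
  intro hc
  obtain ⟨i, -, hi⟩ := id hu
  have hi1 : 1 ≤ i := by
    rcases Nat.eq_zero_or_pos i with h0 | h1
    · exact absurd (by rw [← hi, h0]; rfl) hune
    · exact h1
  have hcyc : IsCyc (nxt f) (topv m) := by
    apply isCyc_of_exists
    refine ⟨t + i, by omega, ?_⟩
    rw [Function.iterate_add_apply, hi, hc]
  have htr : topv m = r := cyc_eq_r hhole hreach hcyc
  exact hune (Rch_r_top hhole hu htr.symm)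

omit hhole in
theorem r_le_TB {z : Fin (m+1)} (hz : z ∈ TB f) : r ≤ z := by
  rcases Finset.mem_insert.1 hz with h | h
  · rw [h]; exact Fin.le_last _
  · obtain ⟨t, ht⟩ := hreach z
    have := iterate_le_omax (nxt f) z t
    rw [ht, (mem_MB.1 h).2.2] at this
    exact this

theorem r_mem_TB : r ∈ TB f := by
  by_cases hr : r = topv m
  · rw [hr]; exact top_mem_TB
  · refine Finset.mem_insert_of_mem (mem_MB.2 ⟨hr, ?_, ?_⟩)
    · obtain ⟨t, ht⟩ := hreach (topv m)
      exact Rch_of_exists ⟨t, ht⟩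
    · obtain ⟨i, hi⟩ := omax_eq_iterate (nxt f) r
      rw [← hi, Function.iterate_fixed (nxt_r hhole)]

theorem rotU_top_eq_r : rotU (TB f) (topv m) = r := by
  have hemp : ¬(gtset (TB f) (topv m)).Nonempty := by
    rintro ⟨z, hz⟩
    exact absurd (Fin.le_last z) (not_le.2 (mem_gtset.1 hz).2)
  rw [rotU, dif_pos top_mem_TB, dif_neg hemp]
  refine le_antisymm (Finset.min'_le _ _ (r_mem_TB hhole hreach)) ?_
  exact r_le_TB hreach ((TB f).min'_mem _)

theorem rotD_TB_r : rotD (TB f) r = topv m := by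
  have := congrArg (rotD (TB f)) (rotU_top_eq_r hhole hreach)
  rw [rotD_rotU] at this
  exact this.symm

theorem psi_hole (v : Fin (m+1)) : psi f v = none ↔ v = topv m := by
  rw [psi, hhole]
  constructor
  · intro h
    have h2 := congrArg (rotD (TB f)) h
    rw [rotD_rotU, rotD_TB_r hhole hreach] at h2
    exact h2
  · intro h
    rw [h, rotU_top_eq_r hhole hreach]

omit hhole hreach in
theorem psi_inj (hinj : Function.Injective f) : Function.Injective (psi f) :=
  fun u v huv => by
    have := hinj huv
    have h2 := congrArg (rotD (TB f)) this
    rwa [rotD_rotU, rotD_rotU] at h2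

omit hreach in
theorem nxt_psi_eq {x : Fin (m+1)} (hne : rotU (TB f) x ≠ r) :
    nxt (psi f) x = nxt f (rotU (TB f) x) := by
  obtain ⟨q, hq⟩ : ∃ q, f (rotU (TB f) x) = some q := by
    cases hq : f (rotU (TB f) x) with
    | none => exact absurd ((hhole _).1 hq) hne
    | some q => exact ⟨q, rfl⟩
  rw [nxt_some (show psi f x = some q from by rw [psi, hq]), nxt_some hq]

theorem mem_MB_rotU {w : Fin (m+1)} (hw : w ∈ MB f) :
    rotU (TB f) w ∈ TB f ∧ w < rotU (TB f) w ∧ rotU (TB f) w ≠ r := by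
  have hwTB : w ∈ TB f := Finset.mem_insert_of_mem hw
  have hwlt : w < topv m :=
    lt_of_le_of_ne (Fin.le_last w) (mem_MB.1 hw).1
  have hne : (gtset (TB f) w).Nonempty := ⟨topv m, mem_gtset.2 ⟨top_mem_TB, hwlt⟩⟩
  obtain ⟨h1, h2⟩ := rotU_of_gt_nonempty hwTB hne
  refine ⟨h1, h2, ?_⟩
  intro hc
  have := congrArg (rotD (TB f)) hc
  rw [rotD_rotU, rotD_TB_r hhole hreach] at this
  exact (mem_MB.1 hw).1 this

/-- first-hit segment lemma: from a reachable non-top vertex, the forward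
path first meets `TB` exactly at its orbit maximum, which lies in `MB`,
and all earlier points are below it and off `TB`. -/
theorem seg {u : Fin (m+1)} (hu : Rch f u) (hune : u ≠ topv m) :
    ∃ t, ((nxt f)^[t] u ∈ MB f) ∧ (∀ i < t, (nxt f)^[i] u ∉ TB f) ∧
      omax (nxt f) u = (nxt f)^[t] u ∧
      (∀ i ≤ t, (nxt f)^[i] u ≤ (nxt f)^[t] u) := by
  classical
  have hex : ∃ t, (nxt f)^[t] u ∈ TB f := by
    obtain ⟨t, ht⟩ := hreach u
    exact ⟨t, by rw [ht]; exact r_mem_TB hhole hreach⟩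
  set t := Nat.find hex with htdef
  have hts : (nxt f)^[t] u ∈ TB f := Nat.find_spec hex
  have hmin : ∀ i < t, (nxt f)^[i] u ∉ TB f := fun i hi => Nat.find_min hex hi
  have hzne : (nxt f)^[t] u ≠ topv m := reach_ne_top hhole hreach hu hune t
  have hzMB : (nxt f)^[t] u ∈ MB f := by
    rcases Finset.mem_insert.1 hts with h | h
    · exact absurd h hzne
    · exact h
  have hclaim : ∀ d i, i + d = t →
      omax (nxt f) ((nxt f)^[i] u) = (nxt f)^[t] u := by
    intro d
    induction d with
    | zero =>
      intro i hi
      rw [Nat.add_zero] at hi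
      rw [hi, (mem_MB.1 hzMB).2.2]
    | succ d ih =>
      intro i hi
      have hi1 : i + 1 + d = t := by omega
      have hlt : i < t := by omega
      have hsucc : nxt f ((nxt f)^[i] u) = (nxt f)^[i+1] u :=
        (Function.iterate_succ_apply' (nxt f) i u).symm
      have homs := omax_succ (nxt f) ((nxt f)^[i] u)
      rw [hsucc, ih (i+1) hi1] at homs
      rcases le_total ((nxt f)^[i] u) ((nxt f)^[t] u) with hle | hle
      · rw [homs, max_eq_right hle]
      · exfalso
        have heq : omax (nxt f) ((nxt f)^[i] u) = (nxt f)^[i] u := by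
          rw [homs, max_eq_left hle]
        exact hmin i hlt (Finset.mem_insert_of_mem (mem_MB.2
          ⟨reach_ne_top hhole hreach hu hune i, Rch_iterate hu i, heq⟩))
  refine ⟨t, hzMB, hmin, hclaim t 0 (by omega), ?_⟩
  intro i hi
  have := hclaim (t - i) i (by omega)
  calc (nxt f)^[i] u ≤ omax (nxt f) ((nxt f)^[i] u) := le_omax _ _
    _ = (nxt f)^[t] u := this

end Psi

section R1
variable {m k : ℕ}
variable {f : Fin (m+1) → Option (Fin (m+1) × Fin k)}
  (hhole : ∀ v, f v = none ↔ v = topv m)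

include hhole

theorem MA_reach : ∀ (n : ℕ) (w : Fin (m+1)), w ∈ MA f → m - (w : ℕ) ≤ n →
    ∃ i, (nxt (phi f))^[i] (topv m) = w := by
  intro n
  induction n using Nat.strong_induction_on with
  | _ n ih =>
    intro w hw hn
    have hwne : w ≠ topv m := (mem_MA.1 hw).1
    have hwTA : w ∈ TA f := Finset.mem_insert_of_mem hw
    have hwlt : w < topv m := lt_of_le_of_ne (Fin.le_last w) hwne
    have hgne : (gtset (TA f) w).Nonempty :=
      ⟨topv m, mem_gtset.2 ⟨top_mem_TA, hwlt⟩⟩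
    obtain ⟨hxTA, hxgt⟩ := rotU_of_gt_nonempty hwTA hgne
    have hrot : rotD (TA f) (rotU (TA f) w) = w := rotD_rotU _ _
    have hrotne : rotD (TA f) (rotU (TA f) w) ≠ topv m := by rw [hrot]; exact hwne
    have hstep : nxt (phi f) (rotU (TA f) w) = nxt f w := by
      rw [nxt_phi_eq hhole hrotne, hrot]
    obtain ⟨hac, hane, haomax⟩ := from_MA_step hhole hw
    obtain ⟨t1, ht1, -⟩ := reach_omax hhole hac hane
    rw [haomax] at ht1
    by_cases hxtop : rotU (TA f) w = topv m
    · refine ⟨t1 + 1, ?_⟩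
      rw [Function.iterate_add_apply, Function.iterate_one, ← hxtop, hstep, ht1]
    · have hxMA : rotU (TA f) w ∈ MA f := by
        rcases Finset.mem_insert.1 hxTA with h | h
        · exact absurd h hxtop
        · exact h
      have hwm : (w : ℕ) < m := by
        have := Fin.lt_last_iff_ne_last.2 hwne
        exact this
      have hxm : m - ((rotU (TA f) w : Fin (m+1)) : ℕ) < n := by
        have : (w : ℕ) < ((rotU (TA f) w : Fin (m+1)) : ℕ) := hxgt
        omega
      obtain ⟨i0, hi0⟩ := ih _ hxm _ hxMA (le_refl _)
      refine ⟨t1 + 1 + i0, ?_⟩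
      rw [Function.iterate_add_apply, hi0, Function.iterate_add_apply,
        Function.iterate_one, hstep, ht1]

theorem phi_Q_step {v u : Fin (m+1)} (h1 : IsCyc (nxt f) u) (h2 : u ≠ topv m)
    (h3 : omax (nxt f) u ≤ v) :
    IsCyc (nxt f) (nxt (phi f) u) ∧ nxt (phi f) u ≠ topv m ∧
      omax (nxt f) (nxt (phi f) u) ≤ v := by
  by_cases hTA : u ∈ TA f
  · have huMA : u ∈ MA f := by
      rcases Finset.mem_insert.1 hTA with h | h
      · exact absurd h h2
      · exact h
    by_cases hrot : rotD (TA f) u = topv m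
    · have hnone : phi f u = none := by rw [phi, hrot]; exact (hhole _).2 rfl
      rw [nxt_none hnone]
      exact ⟨h1, h2, h3⟩
    · obtain ⟨hw2MA, hw2lt⟩ := rotD_MA hTA hrot
      obtain ⟨hac, hane, haomax⟩ := from_MA_step hhole hw2MA
      rw [nxt_phi_eq hhole hrot, haomax]
      exact ⟨hac, hane, le_trans (le_of_lt hw2lt)
        (le_trans (le_omax _ u) h3)⟩
  · rw [nxt_phi_off hTA]
    have e1 : nxt f u = (nxt f)^[1] u := rfl
    refine ⟨e1 ▸ isCyc_iterate _ h1 1, e1 ▸ cyc_iterate_ne_top hhole h1 h2 1, ?_⟩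
    rw [e1, omax_iterate_eq _ h1 1]
    exact h3

theorem omax_phi_MA {v : Fin (m+1)} (hv : v ∈ MA f) :
    omax (nxt (phi f)) v = v := by
  obtain ⟨hne, hc, homax⟩ := mem_MA.1 hv
  have hQ : ∀ s, IsCyc (nxt f) ((nxt (phi f))^[s] v) ∧
      ((nxt (phi f))^[s] v) ≠ topv m ∧
      omax (nxt f) ((nxt (phi f))^[s] v) ≤ v := by
    intro s
    induction s with
    | zero => exact ⟨hc, hne, le_of_eq homax⟩
    | succ s ih =>
      rw [Function.iterate_succ_apply']
      exact phi_Q_step hhole ih.1 ih.2.1 ih.2.2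
  refine le_antisymm ?_ (le_omax _ _)
  obtain ⟨i, hi⟩ := omax_eq_iterate (nxt (phi f)) v
  rw [← hi]
  exact le_trans (le_omax (nxt f) _) (hQ i).2.2

theorem phi_J_step {u : Fin (m+1)}
    (hJ : u = topv m ∨ (IsCyc (nxt f) u ∧ u ≠ topv m)) :
    nxt (phi f) u = topv m ∨
      (IsCyc (nxt f) (nxt (phi f) u) ∧ nxt (phi f) u ≠ topv m) := by
  rcases hJ with h | ⟨hc, hne⟩
  · subst h
    by_cases hrot : rotD (TA f) (topv m) = topv m
    · have hnone : phi f (topv m) = none := by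
        rw [phi, hrot]; exact (hhole _).2 rfl
      left; rw [nxt_none hnone]
    · obtain ⟨hw2MA, -⟩ := rotD_MA top_mem_TA hrot
      obtain ⟨hac, hane, -⟩ := from_MA_step hhole hw2MA
      right
      rw [nxt_phi_eq hhole hrot]
      exact ⟨hac, hane⟩
  · by_cases hTA : u ∈ TA f
    · by_cases hrot : rotD (TA f) u = topv m
      · have hnone : phi f u = none := by rw [phi, hrot]; exact (hhole _).2 rfl
        right; rw [nxt_none hnone]; exact ⟨hc, hne⟩
      · obtain ⟨hw2MA, -⟩ := rotD_MA hTA hrot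
        obtain ⟨hac, hane, -⟩ := from_MA_step hhole hw2MA
        right
        rw [nxt_phi_eq hhole hrot]
        exact ⟨hac, hane⟩
    · right
      rw [nxt_phi_off hTA]
      have e1 : nxt f u = (nxt f)^[1] u := rfl
      exact ⟨e1 ▸ isCyc_iterate _ hc 1, e1 ▸ cyc_iterate_ne_top hhole hc hne 1⟩

theorem MB_phi_eq_MA : MB (phi f) = MA f := by
  ext v
  constructor
  · intro hv
    obtain ⟨hne, hRch, homax'⟩ := mem_MB.1 hv
    have hJ : ∀ s, (nxt (phi f))^[s] (topv m) = topv m ∨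
        (IsCyc (nxt f) ((nxt (phi f))^[s] (topv m)) ∧
          (nxt (phi f))^[s] (topv m) ≠ topv m) := by
      intro s
      induction s with
      | zero => left; rfl
      | succ s ih =>
        rw [Function.iterate_succ_apply']
        rcases ih with h | h
        · exact phi_J_step hhole (Or.inl h)
        · exact phi_J_step hhole (Or.inr h)
    obtain ⟨i, -, hi⟩ := hRch
    have hJi := hJ i
    rw [hi] at hJi
    rcases hJi with h | ⟨hc, -⟩
    · exact absurd h hne
    · obtain ⟨t1, ht1, -⟩ := reach_omax hhole hc hne
      have hle : omax (nxt f) v ≤ omax (nxt (phi f)) v := by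
        rw [← ht1]; exact iterate_le_omax _ _ _
      rw [homax'] at hle
      exact mem_MA.2 ⟨hne, hc, le_antisymm hle (le_omax _ _)⟩
  · intro hv
    refine mem_MB.2 ⟨(mem_MA.1 hv).1, ?_, omax_phi_MA hhole hv⟩
    obtain ⟨i, hi⟩ := MA_reach hhole m v hv (by omega)
    exact Rch_of_exists ⟨i, hi⟩

theorem TB_phi_eq_TA : TB (phi f) = TA f := by
  unfold TB TA
  rw [MB_phi_eq_MA hhole]

theorem psi_phi : psi (phi f) = f := by
  funext v
  rw [psi, TB_phi_eq_TA hhole, phi, rotD_rotU]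

end R1

section R2
variable {m k : ℕ}
variable {f : Fin (m+1) → Option (Fin (m+1) × Fin k)} {r : Fin (m+1)}
  (hhole : ∀ v, f v = none ↔ v = r)
  (hreach : ∀ v, ∃ t, (nxt f)^[t] v = r)

include hhole hreach

theorem top_hit_eq_r {s : ℕ} (hs : 0 < s)
    (ht : (nxt f)^[s] (topv m) = topv m) : topv m = r :=
  cyc_eq_r hhole hreach (isCyc_of_exists _ ⟨s, hs, ht⟩)

omit hhole hreach in
theorem Rch_TB {x : Fin (m+1)} (hx : x ∈ TB f) : Rch f x := by
  rcases Finset.mem_insert.1 hx with h | h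
  · rw [h]; exact Rch_top
  · exact (mem_MB.1 h).2.1

/-- forward: elements of `MB` are cycle maxima of `psi f`. -/
theorem MB_mem_MA_psi {w : Fin (m+1)} (hw : w ∈ MB f) : w ∈ MA (psi f) := by
  obtain ⟨hxTB, hxgt, hxner⟩ := mem_MB_rotU hhole hreach hw
  have hwne : w ≠ topv m := (mem_MB.1 hw).1
  have hrle : r ≤ w := r_le_TB hreach (Finset.mem_insert_of_mem hw)
  have hrtop : r ≠ topv m := by
    intro hc
    have h2 : topv m ≤ w := by rw [← hc]; exact hrle
    exact hwne (le_antisymm (Fin.le_last w) h2)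
  have hstep : nxt (psi f) w = nxt f (rotU (TB f) w) := nxt_psi_eq hhole hxner
  set x := rotU (TB f) w with hxdef
  set b := nxt f x with hbdef
  have hRx : Rch f x := Rch_TB hxTB
  have hbit : b = (nxt f)^[1] x := rfl
  have hRb : Rch f b := by rw [hbit]; exact Rch_iterate hRx 1
  have hbne : b ≠ topv m := by
    intro hc
    obtain ⟨i, -, hi⟩ := hRx
    have h2 : (nxt f)^[1 + i] (topv m) = topv m := by
      rw [Function.iterate_add_apply, hi, ← hbit, hc]
    exact hrtop (top_hit_eq_r hhole hreach (by omega) h2).symm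
  obtain ⟨t, hzMB, hmin, homaxb, hbound⟩ := seg hhole hreach hRb hbne
  set z := (nxt f)^[t] b with hzdef
  have hzit : z = (nxt f)^[t + 1] x := by
    rw [hzdef, hbdef, ← Function.iterate_succ_apply]
  have hzltx : z < x := by
    rcases Finset.mem_insert.1 hxTB with hxt | hxMB
    · exact hxt ▸ lt_of_le_of_ne (Fin.le_last z) (mem_MB.1 hzMB).1
    · have hle : z ≤ x := by
        have h1 : (nxt f)^[t + 1] x ≤ omax (nxt f) x := iterate_le_omax _ _ _
        rw [← hzit, (mem_MB.1 hxMB).2.2] at h1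
        exact h1
      refine lt_of_le_of_ne hle ?_
      intro hc
      refine hxner (cyc_eq_r hhole hreach (isCyc_of_exists _ ⟨t + 1, by omega, ?_⟩))
      rw [← hzit, hc]
  have hzlew : z ≤ w := by
    have := le_rotD hxTB (Finset.mem_insert_of_mem hzMB) hzltx
    rwa [hxdef, rotD_rotU] at this
  have hwlez : w ≤ z := by
    obtain ⟨i, -, hi⟩ := hRx
    obtain ⟨j, -, hj⟩ := (mem_MB.1 hw).2.1
    rcases orbit_linear (nxt f) hj hi with ⟨s, hs⟩ | ⟨s, hs⟩
    · exfalso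
      have : x ≤ omax (nxt f) w := by rw [← hs]; exact iterate_le_omax _ _ _
      rw [(mem_MB.1 hw).2.2] at this
      exact absurd hxgt (not_lt.2 this)
    · have hs1 : s ≠ 0 := by
        intro hc
        rw [hc, Function.iterate_zero_apply] at hs
        exact absurd hs (ne_of_gt hxgt)
      have hws : w = (nxt f)^[s - 1] b := by
        rw [hbdef, ← Function.iterate_succ_apply, ← hs]
        congr 1
        omega
      rw [hws, ← homaxb]
      exact iterate_le_omax _ _ _
  have hzw : z = w := le_antisymm hzlew hwlez
  have hpath : (nxt (psi f))^[t] b = z := by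
    rw [iterate_psi_eq hmin, hzdef]
  have hcycw : (nxt (psi f))^[t + 1] w = w := by
    rw [Function.iterate_succ_apply, hstep, hpath, hzw]
  have hboundw : ∀ i ≤ t + 1, (nxt (psi f))^[i] w ≤ w := by
    intro i hi
    rcases i with _ | j
    · exact le_refl _
    · have hj : j ≤ t := by omega
      have h1 : (nxt (psi f))^[j + 1] w = (nxt (psi f))^[j] b := by
        rw [Function.iterate_succ_apply, hstep]
      have h2 : (nxt (psi f))^[j] b = (nxt f)^[j] b :=
        iterate_psi_eq (fun i2 hi2 => hmin i2 (lt_of_lt_of_le hi2 hj))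
      rw [h1, h2, ← hzw]
      exact hbound j hj
  have homaxw : omax (nxt (psi f)) w = w := by
    refine le_antisymm ?_ (le_omax _ _)
    obtain ⟨i, hi⟩ := omax_eq_iterate (nxt (psi f)) w
    rw [← hi]
    exact iterate_le_of_periodic _ (by omega) hcycw hboundw i
  exact mem_MA.2 ⟨hwne, isCyc_of_exists _ ⟨t + 1, by omega, hcycw⟩, homaxw⟩

theorem psi_J_step {u : Fin (m+1)} (hJ : u = topv m ∨ Rch f u) :
    nxt (psi f) u = topv m ∨ Rch f (nxt (psi f) u) := by
  have htopcase : nxt (psi f) (topv m) = topv m :=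
    nxt_none ((psi_hole hhole hreach (topv m)).2 rfl)
  rcases hJ with h | h
  · left; rw [h, htopcase]
  · by_cases hTB : u ∈ TB f
    · rcases Finset.mem_insert.1 hTB with htop | hMB
      · left; rw [htop, htopcase]
      · obtain ⟨hxTB, -, hxner⟩ := mem_MB_rotU hhole hreach hMB
        right
        rw [nxt_psi_eq hhole hxner]
        have : nxt f (rotU (TB f) u) = (nxt f)^[1] (rotU (TB f) u) := rfl
        rw [this]
        exact Rch_iterate (Rch_TB hxTB) 1
    · right
      rw [nxt_psi_off hTB]
      have : nxt f u = (nxt f)^[1] u := rfl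
      rw [this]
      exact Rch_iterate h 1

theorem MA_psi_Rch {v : Fin (m+1)} (hvne : v ≠ topv m)
    (hc : IsCyc (nxt (psi f)) v) : Rch f v := by
  by_cases hJ : ∃ s, ((nxt (psi f))^[s] v = topv m ∨ Rch f ((nxt (psi f))^[s] v))
  · obtain ⟨s, hs⟩ := hJ
    obtain ⟨s', hs'⟩ := isCyc_return (nxt (psi f)) hc s
    have hprop : ∀ i, (nxt (psi f))^[i] ((nxt (psi f))^[s] v) = topv m ∨
        Rch f ((nxt (psi f))^[i] ((nxt (psi f))^[s] v)) := by
      intro i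
      induction i with
      | zero => exact hs
      | succ i ih =>
        rw [Function.iterate_succ_apply']
        exact psi_J_step hhole hreach ih
    have hfin := hprop s'
    rw [hs'] at hfin
    rcases hfin with h | h
    · exact absurd h hvne
    · exact h
  · push_neg at hJ
    have hiter : ∀ s, (nxt (psi f))^[s] v = (nxt f)^[s] v := by
      intro s
      induction s with
      | zero => rfl
      | succ s ih =>
        have hnTB : (nxt (psi f))^[s] v ∉ TB f := by
          intro hTB
          rcases Finset.mem_insert.1 hTB with h | h
          · exact (hJ s).1 h
          · exact (hJ s).2 (mem_MB.1 h).2.1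
        rw [Function.iterate_succ_apply', Function.iterate_succ_apply',
          nxt_psi_off hnTB, ih]
    have hcf : IsCyc (nxt f) v := by
      obtain ⟨p, hp, hpv⟩ := hc
      exact ⟨p, hp, by rw [← hiter p]; exact hpv⟩
    have hvr : v = r := cyc_eq_r hhole hreach hcf
    rw [hvr]
    exact Rch_of_exists (hreach (topv m))

theorem MA_psi_mem_MB {v : Fin (m+1)} (hv : v ∈ MA (psi f)) : v ∈ MB f := by
  obtain ⟨hvne, hc, homax'⟩ := mem_MA.1 hv
  have hRv : Rch f v := MA_psi_Rch hhole hreach hvne hc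
  obtain ⟨t, hzMB, hmin, homaxv, -⟩ := seg hhole hreach hRv hvne
  have hpath : (nxt (psi f))^[t] v = (nxt f)^[t] v := iterate_psi_eq hmin
  have hzlev : (nxt f)^[t] v ≤ v := by
    have h1 : (nxt (psi f))^[t] v ≤ omax (nxt (psi f)) v := iterate_le_omax _ _ _
    rw [hpath, homax'] at h1
    exact h1
  have hvlez : v ≤ (nxt f)^[t] v := by
    rw [← homaxv]
    exact le_omax _ _
  have hvz : v = (nxt f)^[t] v := le_antisymm hvlez hzlev
  rw [hvz]
  exact hzMB

theorem MA_psi_eq_MB : MA (psi f) = MB f := by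
  ext v
  exact ⟨MA_psi_mem_MB hhole hreach, MB_mem_MA_psi hhole hreach⟩

theorem TA_psi_eq_TB : TA (psi f) = TB f := by
  unfold TA TB
  rw [MA_psi_eq_MB hhole hreach]

theorem phi_psi : phi (psi f) = f := by
  funext v
  rw [phi, TA_psi_eq_TB hhole hreach, psi, rotU_rotD]

end R2

section Stats
variable {m k : ℕ}

/-- `v` is a `j`-excedance-edge of `f`. -/
def excP (f : Fin (m+1) → Option (Fin (m+1) × Fin k)) (j : Fin k)
    (v : Fin (m+1)) : Prop :=
  ∃ q : Fin (m+1) × Fin k, f v = some q ∧ q.2 = j ∧ v < q.1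

/-- `v` is a `j`-subcedance-edge of `f`. -/
def subP (f : Fin (m+1) → Option (Fin (m+1) × Fin k)) (j : Fin k)
    (v : Fin (m+1)) : Prop :=
  ∃ q : Fin (m+1) × Fin k, f v = some q ∧ q.2 = j ∧ q.1 ≤ v

variable {f : Fin (m+1) → Option (Fin (m+1) × Fin k)}
  (hhole : ∀ v, f v = none ↔ v = topv m)

include hhole

/-- key comparison fact: if `f (rotD v) = some q` with `v` possibly moved by
the rotation, the comparisons with `v` and with `rotD v` agree. -/
theorem rot_cmp {v : Fin (m+1)} {q : Fin (m+1) × Fin k}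
    (hq : f (rotD (TA f) v) = some q) :
    (v < q.1 ↔ rotD (TA f) v < q.1) ∧ (q.1 ≤ v ↔ q.1 ≤ rotD (TA f) v) := by
  by_cases hv : v ∈ TA f
  · have hne : rotD (TA f) v ≠ topv m := by
      intro hc
      rw [hc, (hhole _).2 rfl] at hq
      exact nomatch hq
    obtain ⟨hMA, hlt⟩ := rotD_MA hv hne
    have hq1 : q.1 ≤ rotD (TA f) v := by
      have := MA_nxt_le (f := f) hMA
      rwa [nxt_some hq] at this
    constructor
    · constructor
      · intro h
        exact absurd (lt_of_le_of_lt hq1 hlt) (not_lt.2 (le_of_lt h))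
      · intro h
        exact absurd hq1 (not_le.2 h)
    · constructor
      · intro _; exact hq1
      · intro _; exact le_trans hq1 (le_of_lt hlt)
  · rw [rotD_not_mem hv]
    exact ⟨Iff.rfl, Iff.rfl⟩

theorem excP_phi_iff (j : Fin k) (v : Fin (m+1)) :
    excP (phi f) j v ↔ excP f j (rotD (TA f) v) := by
  unfold excP phi
  constructor
  · rintro ⟨q, hq, hj, hlt⟩
    exact ⟨q, hq, hj, ((rot_cmp hhole hq).1).1 hlt⟩
  · rintro ⟨q, hq, hj, hlt⟩
    exact ⟨q, hq, hj, ((rot_cmp hhole hq).1).2 hlt⟩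

theorem subP_phi_iff (j : Fin k) (v : Fin (m+1)) :
    subP (phi f) j v ↔ subP f j (rotD (TA f) v) := by
  unfold subP phi
  constructor
  · rintro ⟨q, hq, hj, hle⟩
    exact ⟨q, hq, hj, ((rot_cmp hhole hq).2).1 hle⟩
  · rintro ⟨q, hq, hj, hle⟩
    exact ⟨q, hq, hj, ((rot_cmp hhole hq).2).2 hle⟩

theorem card_excP_phi (j : Fin k) :
    Nat.card {v : Fin (m+1) // excP (phi f) j v} =
      Nat.card {v : Fin (m+1) // excP f j v} :=
  Nat.card_congr (Equiv.subtypeEquiv (rotEquiv (TA f)) (excP_phi_iff hhole j))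

theorem card_subP_phi (j : Fin k) :
    Nat.card {v : Fin (m+1) // subP (phi f) j v} =
      Nat.card {v : Fin (m+1) // subP f j v} :=
  Nat.card_congr (Equiv.subtypeEquiv (rotEquiv (TA f)) (subP_phi_iff hhole j))

end Stats

section Assemble
variable {m k : ℕ}

def liftg (g : Fin m → Fin (m+1) × Fin k) :
    Fin (m+1) → Option (Fin (m+1) × Fin k) :=
  fun v => if h : v = Fin.last m then none else some (g (v.castPred h))

theorem liftg_hole (g : Fin m → Fin (m+1) × Fin k) (v : Fin (m+1)) :
    liftg g v = none ↔ v = topv m := by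
  unfold liftg topv
  by_cases h : v = Fin.last m
  · simp [h]
  · simp [h]

theorem liftg_inj {g : Fin m → Fin (m+1) × Fin k}
    (hg : Function.Injective g) : Function.Injective (liftg g) := by
  intro u v huv
  unfold liftg at huv
  by_cases hu : u = Fin.last m <;> by_cases hv : v = Fin.last m
  · rw [hu, hv]
  · rw [dif_pos hu, dif_neg hv] at huv; exact nomatch huv
  · rw [dif_neg hu, dif_pos hv] at huv; exact nomatch huv
  · rw [dif_neg hu, dif_neg hv] at huv
    have := hg (Option.some.inj huv)
    have h2 := congrArg Fin.castSucc this
    rwa [Fin.castSucc_castPred, Fin.castSucc_castPred] at h2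

theorem isSome_of_ne {f : Fin (m+1) → Option (Fin (m+1) × Fin k)}
    {r v : Fin (m+1)} (hhole : ∀ v, f v = none ↔ v = r) (hv : v ≠ r) :
    (f v).isSome := by
  cases hfv : f v with
  | none => exact absurd ((hhole v).1 hfv) hv
  | some q => rfl

/-- build a plane tree from a good parent function. -/
def mkTree (f : Fin (m+1) → Option (Fin (m+1) × Fin k)) (r : Fin (m+1))
    (hinj : Function.Injective f) (hhole : ∀ v, f v = none ↔ v = r)
    (hreach : ∀ v, ∃ t, (nxt f)^[t] v = r) : PlaneTree (m+1) k where
  root := r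
  par v := (f v.1).get (isSome_of_ne hhole v.2)
  par_inj := by
    intro u v huv
    have hu := Option.some_get (isSome_of_ne hhole u.2)
    have hv := Option.some_get (isSome_of_ne hhole v.2)
    have : f u.1 = f v.1 := by rw [← hu, ← hv]; exact congrArg _ huv
    exact Subtype.ext (hinj this)
  reach := by
    intro v
    obtain ⟨t, ht⟩ := hreach v
    refine ⟨t, ?_⟩
    have hfun : (fun u : Fin (m+1) => if h : u = r then r
        else ((f u).get (isSome_of_ne hhole h)).1) = nxt f := by
      funext u
      by_cases h : u = r
      · rw [dif_pos h, h, nxt_none ((hhole r).2 rfl)]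
      · rw [dif_neg h]
        obtain ⟨q, hq⟩ : ∃ q, f u = some q := by
          cases hfu : f u with
          | none => exact absurd ((hhole u).1 hfu) h
          | some q => exact ⟨q, rfl⟩
        rw [nxt_some hq]
        congr 1
        simp [hq]
    rw [hfun]
    exact ht

theorem mkTree_par (f : Fin (m+1) → Option (Fin (m+1) × Fin k)) (r : Fin (m+1))
    (hinj : Function.Injective f) (hhole : ∀ v, f v = none ↔ v = r)
    (hreach : ∀ v, ∃ t, (nxt f)^[t] v = r) (v : {v : Fin (m+1) // v ≠ r}) :
    (mkTree f r hinj hhole hreach).par v = (f v.1).get (isSome_of_ne hhole v.2) :=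
  rfl

theorem mkTree_root (f : Fin (m+1) → Option (Fin (m+1) × Fin k)) (r : Fin (m+1))
    (hinj : Function.Injective f) (hhole : ∀ v, f v = none ↔ v = r)
    (hreach : ∀ v, ∃ t, (nxt f)^[t] v = r) :
    (mkTree f r hinj hhole hreach).root = r := rfl

/-- helper equivalence: restricting along `castSucc`. -/
def castSuccSubtypeEquiv (Q : Fin (m+1) → Prop) (P : Fin m → Prop)
    (hPQ : ∀ i, Q (Fin.castSucc i) ↔ P i) (hlast : ¬ Q (Fin.last m)) :
    {i : Fin m // P i} ≃ {v : Fin (m+1) // Q v} where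
  toFun i := ⟨Fin.castSucc i.1, (hPQ i.1).2 i.2⟩
  invFun v := ⟨(v.1).castPred (fun hc => hlast (hc ▸ v.2)), (hPQ _).1 (by
      rw [Fin.castSucc_castPred]; exact v.2)⟩
  left_inv i := Subtype.ext (by simp)
  right_inv v := Subtype.ext (by simp)

/-- helper equivalence: moving into the `≠ r` subtype. -/
def subtypeNeEquiv (r : Fin (m+1)) (Q : Fin (m+1) → Prop)
    (R : {v : Fin (m+1) // v ≠ r} → Prop)
    (hQr : ¬ Q r) (hQR : ∀ v : {v : Fin (m+1) // v ≠ r}, Q v.1 ↔ R v) :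
    {v : Fin (m+1) // Q v} ≃ {v' : {v : Fin (m+1) // v ≠ r} // R v'} where
  toFun v := ⟨⟨v.1, fun hc => hQr (hc ▸ v.2)⟩, (hQR _).1 v.2⟩
  invFun w := ⟨w.1.1, (hQR _).2 w.2⟩
  left_inv v := Subtype.ext rfl
  right_inv w := Subtype.ext (Subtype.ext rfl)

theorem excP_liftg_iff (g : Fin m → Fin (m+1) × Fin k) (j : Fin k) (i : Fin m) :
    excP (liftg g) j (Fin.castSucc i) ↔
      ((g i).2 = j ∧ ((i : ℕ) < ((g i).1 : ℕ))) := by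
  unfold excP liftg
  rw [dif_neg (Fin.ne_last_of_lt (Fin.castSucc_lt_last i))]
  rw [Fin.castPred_castSucc]
  constructor
  · rintro ⟨q, hq, hj, hlt⟩
    have hqe : q = g i := (Option.some.inj hq).symm
    subst hqe
    exact ⟨hj, by rw [Fin.lt_def, Fin.coe_castSucc] at hlt; exact hlt⟩
  · rintro ⟨hj, hlt⟩
    exact ⟨g i, rfl, hj, by rw [Fin.lt_def, Fin.coe_castSucc]; exact hlt⟩

theorem subP_liftg_iff (g : Fin m → Fin (m+1) × Fin k) (j : Fin k) (i : Fin m) :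
    subP (liftg g) j (Fin.castSucc i) ↔
      ((g i).2 = j ∧ (((g i).1 : ℕ) ≤ (i : ℕ))) := by
  unfold subP liftg
  rw [dif_neg (Fin.ne_last_of_lt (Fin.castSucc_lt_last i))]
  rw [Fin.castPred_castSucc]
  constructor
  · rintro ⟨q, hq, hj, hle⟩
    have hqe : q = g i := (Option.some.inj hq).symm
    subst hqe
    exact ⟨hj, by rw [Fin.le_def, Fin.coe_castSucc] at hle; exact hle⟩
  · rintro ⟨hj, hle⟩
    exact ⟨g i, rfl, hj, by rw [Fin.le_def, Fin.coe_castSucc]; exact hle⟩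

theorem excP_last_not (g : Fin m → Fin (m+1) × Fin k) (j : Fin k) :
    ¬ excP (liftg g) j (Fin.last m) := by
  rintro ⟨q, hq, -, -⟩
  rw [(liftg_hole g (Fin.last m)).2 rfl] at hq
  exact nomatch hq

theorem subP_last_not (g : Fin m → Fin (m+1) × Fin k) (j : Fin k) :
    ¬ subP (liftg g) j (Fin.last m) := by
  rintro ⟨q, hq, -, -⟩
  rw [(liftg_hole g (Fin.last m)).2 rfl] at hq
  exact nomatch hq

-- statistics through `mkTree`
theorem excP_desc_iff (f : Fin (m+1) → Option (Fin (m+1) × Fin k))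
    (r : Fin (m+1)) (hinj : Function.Injective f)
    (hhole : ∀ v, f v = none ↔ v = r)
    (hreach : ∀ v, ∃ t, (nxt f)^[t] v = r) (j : Fin k)
    (v : {v : Fin (m+1) // v ≠ r}) :
    excP f j v.1 ↔ (mkTree f r hinj hhole hreach).IsDesc j v := by
  unfold PlaneTree.IsDesc excP
  rw [mkTree_par]
  constructor
  · rintro ⟨q, hq, hj, hlt⟩
    have : (f v.1).get (isSome_of_ne hhole v.2) = q := by simp [hq]
    rw [this]
    exact ⟨hj, hlt⟩
  · rintro ⟨hj, hlt⟩
    exact ⟨(f v.1).get (isSome_of_ne hhole v.2),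
      (Option.some_get _).symm, hj, hlt⟩

theorem nxt_fix_ne {f : Fin (m+1) → Option (Fin (m+1) × Fin k)}
    {r v : Fin (m+1)} {q : Fin (m+1) × Fin k}
    (hhole : ∀ v, f v = none ↔ v = r)
    (hreach : ∀ v, ∃ t, (nxt f)^[t] v = r)
    (hq : f v = some q) : q.1 ≠ v := by
  intro hc
  have hfix : nxt f v = v := by rw [nxt_some hq, hc]
  obtain ⟨t, ht⟩ := hreach v
  rw [Function.iterate_fixed hfix] at ht
  rw [ht, (hhole r).2 rfl] at hq
  exact nomatch hq

theorem subP_asc_iff (f : Fin (m+1) → Option (Fin (m+1) × Fin k))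
    (r : Fin (m+1)) (hinj : Function.Injective f)
    (hhole : ∀ v, f v = none ↔ v = r)
    (hreach : ∀ v, ∃ t, (nxt f)^[t] v = r) (j : Fin k)
    (v : {v : Fin (m+1) // v ≠ r}) :
    subP f j v.1 ↔ (mkTree f r hinj hhole hreach).IsAsc j v := by
  unfold PlaneTree.IsAsc subP
  rw [mkTree_par]
  constructor
  · rintro ⟨q, hq, hj, hle⟩
    have hget : (f v.1).get (isSome_of_ne hhole v.2) = q := by simp [hq]
    rw [hget]
    exact ⟨hj, lt_of_le_of_ne hle (nxt_fix_ne hhole hreach hq)⟩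
  · rintro ⟨hj, hlt⟩
    exact ⟨(f v.1).get (isSome_of_ne hhole v.2),
      (Option.some_get _).symm, hj, le_of_lt hlt⟩

theorem excP_r_not (f : Fin (m+1) → Option (Fin (m+1) × Fin k))
    {r : Fin (m+1)} (hhole : ∀ v, f v = none ↔ v = r) (j : Fin k) :
    ¬ excP f j r := by
  rintro ⟨q, hq, -, -⟩
  rw [(hhole r).2 rfl] at hq
  exact nomatch hq

theorem subP_r_not (f : Fin (m+1) → Option (Fin (m+1) × Fin k))
    {r : Fin (m+1)} (hhole : ∀ v, f v = none ↔ v = r) (j : Fin k) :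
    ¬ subP f j r := by
  rintro ⟨q, hq, -, -⟩
  rw [(hhole r).2 rfl] at hq
  exact nomatch hq

end Assemble

section Final
variable {m k : ℕ}

theorem opt_get_congr {α : Type*} {o o' : Option α} (h : o = o')
    (h1 : o.isSome) (h2 : o'.isSome) : o.get h1 = o'.get h2 := by
  cases h; rfl

def treeify (T : PlaneTree (m+1) k) : Fin (m+1) → Option (Fin (m+1) × Fin k) :=
  fun v => if h : v = T.root then none else some (T.par ⟨v, h⟩)

theorem treeify_hole (T : PlaneTree (m+1) k) (v : Fin (m+1)) :
    treeify T v = none ↔ v = T.root := by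
  unfold treeify
  by_cases h : v = T.root <;> simp [h]

theorem treeify_inj (T : PlaneTree (m+1) k) :
    Function.Injective (treeify T) := by
  intro u v huv
  unfold treeify at huv
  by_cases hu : u = T.root <;> by_cases hv : v = T.root
  · rw [hu, hv]
  · rw [dif_pos hu, dif_neg hv] at huv; exact nomatch huv
  · rw [dif_neg hu, dif_pos hv] at huv; exact nomatch huv
  · rw [dif_neg hu, dif_neg hv] at huv
    exact congrArg Subtype.val (T.par_inj (Option.some.inj huv))

theorem nxt_treeify (T : PlaneTree (m+1) k) :
    nxt (treeify T) = fun u =>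
      if h : u = T.root then T.root else (T.par ⟨u, h⟩).1 := by
  funext u
  by_cases h : u = T.root
  · rw [dif_pos h, nxt_none ((treeify_hole T u).2 h), h]
  · rw [dif_neg h, nxt_some (show treeify T u = some (T.par ⟨u, h⟩) from dif_neg h)]

theorem treeify_reach (T : PlaneTree (m+1) k) (v : Fin (m+1)) :
    ∃ t, (nxt (treeify T))^[t] v = T.root := by
  rw [nxt_treeify]
  exact T.reach v

theorem tree_eq_of_treeify_eq {T T' : PlaneTree (m+1) k}
    (h : treeify T = treeify T') : T = T' := by
  have hroot : T.root = T'.root := by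
    have h1 : treeify T' T.root = none := by rw [← h]; exact (treeify_hole T _).2 rfl
    exact (treeify_hole T' _).1 h1
  cases T with
  | mk root par pinj reach =>
    cases T' with
    | mk root' par' pinj' reach' =>
      simp only at hroot
      subst hroot
      have hpar : par = par' := by
        funext v
        have h1 := congrFun h v.1
        unfold treeify at h1
        simp only at h1
        rw [dif_neg v.2, dif_neg v.2] at h1
        exact Option.some.inj h1
      subst hpar
      rfl

theorem treeify_mkTree (f : Fin (m+1) → Option (Fin (m+1) × Fin k))
    (r : Fin (m+1)) (hinj : Function.Injective f)
    (hhole : ∀ v, f v = none ↔ v = r)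
    (hreach : ∀ v, ∃ t, (nxt f)^[t] v = r) :
    treeify (mkTree f r hinj hhole hreach) = f := by
  funext v
  unfold treeify
  show (if h : v = r then none else some ((mkTree f r hinj hhole hreach).par ⟨v, h⟩)) = f v
  by_cases h : v = r
  · rw [dif_pos h, h]
    exact ((hhole r).2 rfl).symm
  · rw [dif_neg h]
    exact (congrArg some (mkTree_par f r hinj hhole hreach ⟨v, h⟩)).trans (Option.some_get _)

theorem rA_psi {f : Fin (m+1) → Option (Fin (m+1) × Fin k)} {r : Fin (m+1)}
    (hhole : ∀ v, f v = none ↔ v = r)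
    (hreach : ∀ v, ∃ t, (nxt f)^[t] v = r) :
    rA (psi f) = r := by
  unfold rA
  rw [TA_psi_eq_TB hhole hreach]
  exact rotU_top_eq_r hhole hreach

def unlift (f : Fin (m+1) → Option (Fin (m+1) × Fin k))
    (hhole : ∀ v, f v = none ↔ v = topv m) : Fin m → Fin (m+1) × Fin k :=
  fun i => (f (Fin.castSucc i)).get
    (isSome_of_ne hhole (Fin.ne_last_of_lt (Fin.castSucc_lt_last i)))

theorem liftg_unlift {f : Fin (m+1) → Option (Fin (m+1) × Fin k)}
    (hhole : ∀ v, f v = none ↔ v = topv m) :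
    liftg (unlift f hhole) = f := by
  funext v
  unfold liftg unlift
  by_cases h : v = Fin.last m
  · rw [dif_pos h, h]
    exact ((hhole _).2 rfl).symm
  · rw [dif_neg h]
    have h2 : Fin.castSucc (v.castPred h) = v := Fin.castSucc_castPred v h
    calc some ((f (Fin.castSucc (v.castPred h))).get _)
        = f (Fin.castSucc (v.castPred h)) := Option.some_get _
      _ = f v := by rw [h2]

theorem unlift_inj {f : Fin (m+1) → Option (Fin (m+1) × Fin k)}
    (hhole : ∀ v, f v = none ↔ v = topv m) (hinj : Function.Injective f) :
    Function.Injective (unlift f hhole) := by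
  intro u v huv
  unfold unlift at huv
  have h1 : f (Fin.castSucc u) = f (Fin.castSucc v) := by
    rw [← Option.some_get (isSome_of_ne hhole
        (Fin.ne_last_of_lt (Fin.castSucc_lt_last u))),
      ← Option.some_get (isSome_of_ne hhole
        (Fin.ne_last_of_lt (Fin.castSucc_lt_last v))), huv]
  exact Fin.castSucc_injective m (hinj h1)

/-- the grand bijection. -/
def Egt : {g : Fin m → Fin (m+1) × Fin k // Function.Injective g} ≃
    PlaneTree (m+1) k where
  toFun g := mkTree (phi (liftg g.1)) (rA (liftg g.1))
    (phi_inj (liftg_inj g.2)) (phi_hole (liftg_hole g.1))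
    (phi_reach (liftg_hole g.1))
  invFun T := ⟨unlift (psi (treeify T))
      (fun v => psi_hole (treeify_hole T) (treeify_reach T) v),
    unlift_inj _ (psi_inj (treeify_inj T))⟩
  left_inv g := by
    apply Subtype.ext
    funext i
    have hpp : psi (phi (liftg g.1)) = liftg g.1 := psi_phi (liftg_hole g.1)
    have h1 : psi (treeify (mkTree (phi (liftg g.1)) (rA (liftg g.1))
        (phi_inj (liftg_inj g.2)) (phi_hole (liftg_hole g.1))
        (phi_reach (liftg_hole g.1)))) (Fin.castSucc i) = some (g.1 i) := by
      rw [treeify_mkTree, hpp]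
      unfold liftg
      rw [dif_neg (Fin.ne_last_of_lt (Fin.castSucc_lt_last i)),
        Fin.castPred_castSucc]
    exact opt_get_congr h1 _ rfl
  right_inv T := by
    apply tree_eq_of_treeify_eq
    rw [treeify_mkTree, liftg_unlift]
    exact phi_psi (treeify_hole T) (treeify_reach T)

theorem card_desc (g : {g : Fin m → Fin (m+1) × Fin k // Function.Injective g})
    (j : Fin k) :
    Nat.card {i : Fin m // (g.1 i).2 = j ∧ ((i : ℕ) < ((g.1 i).1 : ℕ))} =
      Nat.card {v : {v : Fin (m+1) // v ≠ (Egt g).root} // (Egt g).IsDesc j v} := by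
  have c1 : Nat.card {i : Fin m // (g.1 i).2 = j ∧ ((i : ℕ) < ((g.1 i).1 : ℕ))} =
      Nat.card {v : Fin (m+1) // excP (liftg g.1) j v} :=
    Nat.card_congr (castSuccSubtypeEquiv _ _
      (excP_liftg_iff g.1 j) (excP_last_not g.1 j))
  have c2 : Nat.card {v : Fin (m+1) // excP (phi (liftg g.1)) j v} =
      Nat.card {v : Fin (m+1) // excP (liftg g.1) j v} :=
    card_excP_phi (liftg_hole g.1) j
  have c3 : Nat.card {v : Fin (m+1) // excP (phi (liftg g.1)) j v} =
      Nat.card {v : {v : Fin (m+1) // v ≠ (Egt g).root} // (Egt g).IsDesc j v} :=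
    Nat.card_congr (subtypeNeEquiv (rA (liftg g.1)) _ _
      (excP_r_not _ (phi_hole (liftg_hole g.1)) j)
      (excP_desc_iff (phi (liftg g.1)) (rA (liftg g.1))
        (phi_inj (liftg_inj g.2)) (phi_hole (liftg_hole g.1))
        (phi_reach (liftg_hole g.1)) j))
  rw [c1, ← c2, c3]

theorem card_asc (g : {g : Fin m → Fin (m+1) × Fin k // Function.Injective g})
    (j : Fin k) :
    Nat.card {i : Fin m // (g.1 i).2 = j ∧ (((g.1 i).1 : ℕ) ≤ (i : ℕ))} =
      Nat.card {v : {v : Fin (m+1) // v ≠ (Egt g).root} // (Egt g).IsAsc j v} := by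
  have c1 : Nat.card {i : Fin m // (g.1 i).2 = j ∧ (((g.1 i).1 : ℕ) ≤ (i : ℕ))} =
      Nat.card {v : Fin (m+1) // subP (liftg g.1) j v} :=
    Nat.card_congr (castSuccSubtypeEquiv _ _
      (subP_liftg_iff g.1 j) (subP_last_not g.1 j))
  have c2 : Nat.card {v : Fin (m+1) // subP (phi (liftg g.1)) j v} =
      Nat.card {v : Fin (m+1) // subP (liftg g.1) j v} :=
    card_subP_phi (liftg_hole g.1) j
  have c3 : Nat.card {v : Fin (m+1) // subP (phi (liftg g.1)) j v} =
      Nat.card {v : {v : Fin (m+1) // v ≠ (Egt g).root} // (Egt g).IsAsc j v} :=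
    Nat.card_congr (subtypeNeEquiv (rA (liftg g.1)) _ _
      (subP_r_not _ (phi_hole (liftg_hole g.1)) j)
      (subP_asc_iff (phi (liftg g.1)) (rA (liftg g.1))
        (phi_inj (liftg_inj g.2)) (phi_hole (liftg_hole g.1))
        (phi_reach (liftg_hole g.1)) j))
  rw [c1, ← c2, c3]

theorem main (m k : ℕ) (α β : Fin k → ℕ) :
    Nat.card {g : Fin m → Fin (m+1) × Fin k // Function.Injective g ∧
        ∀ j : Fin k,
          Nat.card {i : Fin m //
            (g i).2 = j ∧ ((i : ℕ) < ((g i).1 : ℕ))} = α j ∧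
          Nat.card {i : Fin m //
            (g i).2 = j ∧ (((g i).1 : ℕ) ≤ (i : ℕ))} = β j} =
      Nat.card {T : PlaneTree (m+1) k //
        ∀ j : Fin k,
          Nat.card {v : {v : Fin (m+1) // v ≠ T.root} // T.IsDesc j v} = α j ∧
          Nat.card {v : {v : Fin (m+1) // v ≠ T.root} // T.IsAsc j v} = β j} := by
  rw [← Nat.card_congr (Equiv.subtypeSubtypeEquivSubtypeInter
    (fun g : Fin m → Fin (m+1) × Fin k => Function.Injective g)
    (fun g => ∀ j : Fin k,
      Nat.card {i : Fin m // (g i).2 = j ∧ ((i : ℕ) < ((g i).1 : ℕ))} = α j ∧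
      Nat.card {i : Fin m // (g i).2 = j ∧ (((g i).1 : ℕ) ≤ (i : ℕ))} = β j))]
  apply Nat.card_congr
  refine Equiv.subtypeEquiv Egt ?_
  intro g
  constructor
  · intro hs j
    rw [← card_desc g j, ← card_asc g j]
    exact hs j
  · intro hs j
    rw [card_desc g j, card_asc g j]
    exact hs j

end Final

end ProofER

/-- for weak compositions `α, β : Fin k → ℕ` with
`∑ α + ∑ β = n - 1`, the number of injective functions
`g : {1,…,n-1} → {1,…,n} × {1,…,k}` with exactly `α j` many `j`-excedances
and `β j` many `j`-subcedances for every `j` equals the number of labeled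
rooted plane `k`-ary trees on `n` nodes with exactly `α j` many `j`-descents
and `β j` many `j`-ascents for every `j`.  (Here `i : Fin (n-1)` is a
`j`-excedance of `g` if `g i = (p, j)` with `p > i` as 1-based labels, i.e.
`(p : ℕ) > (i : ℕ)` for the 0-based encodings, and a `j`-subcedance
otherwise.) -/
theorem card_exc_sub_eq_card_desc_asc (n k : ℕ) (hn : 2 ≤ n) (hk : 2 ≤ k)
    (α β : Fin k → ℕ) (hαβ : (∑ j, α j) + (∑ j, β j) = n - 1) :
    Nat.card {g : Fin (n - 1) → Fin n × Fin k // Function.Injective g ∧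
        ∀ j : Fin k,
          Nat.card {i : Fin (n - 1) //
            (g i).2 = j ∧ ((i : ℕ) < ((g i).1 : ℕ))} = α j ∧
          Nat.card {i : Fin (n - 1) //
            (g i).2 = j ∧ (((g i).1 : ℕ) ≤ (i : ℕ))} = β j} =
      Nat.card {T : PlaneTree n k //
        ∀ j : Fin k,
          Nat.card {v : {v : Fin n // v ≠ T.root} // T.IsDesc j v} = α j ∧
          Nat.card {v : {v : Fin n // v ≠ T.root} // T.IsAsc j v} = β j} := by
  obtain ⟨m, rfl⟩ : ∃ m, n = m + 1 := ⟨n - 1, by omega⟩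
  exact ProofER.main m k α β
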